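/- In the partial information model, the difference query satisfies: for an ordered list (i_1,...,i_k) of agents, defining diff(i) = E[Y | S_i] and diff(i_1,...,i_k) = E[Y - Σ_{1 ≤ j < k} diff(i_1,...,i_j) | S_{i_k}], we have diff(i_1,...,i_k) = Σ_{T : i_k ∈ T, i_ℓ ∉ T for all ℓ < k} X_T, i.e., the conditional expectation of Y given the signals observed by agent i_k but by none of agents i_1,...,i_{k-1}. -/

import Mathlib

open MeasureTheory ProbabilityTheory

/-- The σ-algebra generated by agent `i`'s signals `{X T : i ∈ T}`. -/
def agentSigma {Ω : Type*} {n : ℕ} (X : Finset (Fin n) → Ω → ℝ) (i : Fin n) :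
    MeasurableSpace Ω :=
  ⨆ T ∈ {T : Finset (Fin n) | i ∈ T}, MeasurableSpace.comap (X T) inferInstance

/-- Difference query, with lists in reverse order: for `L = [i_k, …, i_1]`,
`diffQ X L` is `diff(i_1, …, i_k)` of the paper.  `diffQ X [] = 0` and
`diffQ X (i :: L) = E[Y − ∑_{nonempty suffixes L' of L} diffQ X L' ∣ S_i]`,
i.e. `diff(i_1,…,i_k) = E[Y − ∑_{1 ≤ j < k} diff(i_1,…,i_j) ∣ S_{i_k}]`. -/
noncomputable def diffQ {Ω : Type*} [MeasureSpace Ω] {n : ℕ}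
    (X : Finset (Fin n) → Ω → ℝ) : List (Fin n) → Ω → ℝ
  | [] => 0
  | (i :: L) =>
      (ℙ : Measure Ω)[(fun ω => (∑ T : Finset (Fin n), X T ω)
        - ∑ j ∈ Finset.range L.length, diffQ X (L.drop j) ω) | agentSigma X i]
  termination_by L => L.length
  decreasing_by
    simp only [List.length_drop, List.length_cons]
    omega

lemma partition_sum {n : ℕ} (L : List (Fin n)) (f : Finset (Fin n) → ℝ) :
    (∑ T : Finset (Fin n), f T)
      - ∑ j : Fin L.length, ∑ T ∈ Finset.univ.filter
          (fun T => L.get j ∈ T ∧ ∀ m ∈ L.drop (j.1+1), m ∉ T), f T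
    = ∑ T ∈ Finset.univ.filter (fun T : Finset (Fin n) => ∀ m ∈ L, m ∉ T), f T := by
  classical
  set B : Fin L.length → Finset (Finset (Fin n)) := fun j =>
    Finset.univ.filter (fun T => L.get j ∈ T ∧ ∀ m ∈ L.drop (j.1+1), m ∉ T) with hB
  have hdisj : ∀ j₁ ∈ (Finset.univ : Finset (Fin L.length)), ∀ j₂ ∈ Finset.univ,
      j₁ ≠ j₂ → Disjoint (B j₁) (B j₂) := by
    have key : ∀ j₁ j₂ : Fin L.length, j₁ < j₂ → Disjoint (B j₁) (B j₂) := by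
      intro j₁ j₂ hlt
      refine Finset.disjoint_left.mpr fun T hT1 hT2 => ?_
      simp only [hB, Finset.mem_filter] at hT1 hT2
      have hmem : L.get j₂ ∈ L.drop (j₁.1+1) := by
        have h2 : j₂.1 - (j₁.1+1) < (L.drop (j₁.1+1)).length := by
          simp [List.length_drop]; omega
        have : (L.drop (j₁.1+1)).get ⟨j₂.1 - (j₁.1+1), h2⟩ = L.get j₂ := by
          simp [List.get_eq_getElem, List.getElem_drop]
          congr 1
          omega
        rw [← this]
        exact List.get_mem _ _
      exact hT1.2.2 _ hmem hT2.2.1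
    intro j₁ _ j₂ _ hne
    rcases lt_or_gt_of_ne hne with h | h
    · exact key _ _ h
    · exact (key _ _ h).symm
  have hD : Finset.univ.biUnion B
      = Finset.univ.filter (fun T : Finset (Fin n) => ¬ ∀ m ∈ L, m ∉ T) := by
    ext T
    simp only [Finset.mem_biUnion, Finset.mem_filter, Finset.mem_univ, true_and, hB]
    constructor
    · rintro ⟨j, hj, -⟩
      push_neg
      exact ⟨L.get j, List.get_mem _ _, hj⟩
    · intro h
      push_neg at h
      obtain ⟨m, hmL, hmT⟩ := h
      have hS : (Finset.univ.filter (fun j : Fin L.length => L.get j ∈ T)).Nonempty := by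
        obtain ⟨j, hj⟩ := List.mem_iff_get.mp hmL
        refine ⟨j, by simp only [Finset.mem_filter, Finset.mem_univ, true_and]; rw [hj]; exact hmT⟩
      set j₀ := (Finset.univ.filter (fun j : Fin L.length => L.get j ∈ T)).max' hS with hj₀
      have hj₀T : L.get j₀ ∈ T := by
        have := Finset.max'_mem _ hS
        exact (Finset.mem_filter.mp this).2
      refine ⟨j₀, hj₀T, fun m' hm' hm'T => ?_⟩
      obtain ⟨r, hr, hrm⟩ := List.mem_iff_getElem.mp hm'
      rw [List.getElem_drop] at hrm
      have hlt : j₀.1 + 1 + r < L.length := by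
        simp [List.length_drop] at hr; omega
      have hj' : (⟨j₀.1+1+r, hlt⟩ : Fin L.length) ∈
          Finset.univ.filter (fun j : Fin L.length => L.get j ∈ T) := by
        simp only [Finset.mem_filter, Finset.mem_univ, true_and]
        simpa [List.get_eq_getElem] using hrm ▸ hm'T
      have := Finset.le_max' _ _ hj'
      rw [← hj₀] at this
      have : j₀.1 + 1 + r ≤ j₀.1 := this
      omega
  have h1 : ∑ j : Fin L.length, ∑ T ∈ B j, f T
      = ∑ T ∈ Finset.univ.biUnion B, f T := (Finset.sum_biUnion hdisj).symm
  have h2 := Finset.sum_filter_add_sum_filter_not Finset.univ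
    (fun T : Finset (Fin n) => ∀ m ∈ L, m ∉ T) f
  rw [h1, hD]
  linarith

section Aux
variable {Ω : Type*} [MeasureSpace Ω] [IsProbabilityMeasure (ℙ : Measure Ω)]
  {n : ℕ} {X : Finset (Fin n) → Ω → ℝ}

omit [IsProbabilityMeasure (ℙ : Measure Ω)] in
lemma agentSigma_le (hmeas : ∀ T, Measurable (X T)) (i : Fin n) :
    agentSigma X i ≤ (inferInstance : MeasurableSpace Ω) :=
  iSup₂_le fun T _ => (hmeas T).comap_le

omit [MeasureSpace Ω] [IsProbabilityMeasure (ℙ : Measure Ω)] in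
lemma measurable_agentSigma (i : Fin n) {T : Finset (Fin n)} (hiT : i ∈ T) :
    Measurable[agentSigma X i] (X T) := by
  have h : MeasurableSpace.comap (X T) inferInstance ≤ agentSigma X i :=
    le_iSup₂ (f := fun (T : Finset (Fin n)) (_ : T ∈ {T : Finset (Fin n) | i ∈ T}) =>
      MeasurableSpace.comap (X T) inferInstance) T hiT
  exact (Measurable.of_comap_le le_rfl).mono h le_rfl

lemma indep_agentSigma (hindep : iIndepFun X ℙ)
    (hmeas : ∀ T, Measurable (X T)) (i : Fin n) {T : Finset (Fin n)} (hiT : i ∉ T) :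
    Indep (MeasurableSpace.comap (X T) inferInstance) (agentSigma X i) ℙ := by
  have h := indep_biSup_compl (s := fun T => MeasurableSpace.comap (X T) inferInstance)
    (fun T => (hmeas T).comap_le) ((iIndepFun_iff_iIndep _ _ _).mp hindep) ({T} : Set (Finset (Fin n)))
  simp only [Set.mem_singleton_iff, iSup_iSup_eq_left] at h
  refine indep_of_indep_of_le_right h ?_
  refine iSup₂_le fun T' hT' => ?_
  exact le_iSup₂ (f := fun (T' : Finset (Fin n)) (_ : T' ∈ ({T} : Set (Finset (Fin n)))ᶜ) =>
    MeasurableSpace.comap (X T') inferInstance) T' (by simp; rintro rfl; exact hiT hT')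

lemma condexp_mem (hmeas : ∀ T, Measurable (X T)) (hint : ∀ T, Integrable (X T) ℙ)
    (i : Fin n) {T : Finset (Fin n)} (hiT : i ∈ T) :
    (ℙ : Measure Ω)[X T | agentSigma X i] = X T :=
  condExp_of_stronglyMeasurable (agentSigma_le hmeas i)
    (measurable_agentSigma i hiT).stronglyMeasurable (hint T)

lemma condexp_not_mem (hindep : iIndepFun X ℙ)
    (hmeas : ∀ T, Measurable (X T)) (hmean : ∀ T, ∫ ω, X T ω ∂ℙ = 0)
    (i : Fin n) {T : Finset (Fin n)} (hiT : i ∉ T) :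
    (ℙ : Measure Ω)[X T | agentSigma X i] =ᵐ[ℙ] 0 := by
  have h := condExp_indep_eq (μ := ℙ) (f := X T)
    ((hmeas T).comap_le) (agentSigma_le hmeas i)
    (Measurable.of_comap_le le_rfl).stronglyMeasurable
    (indep_agentSigma hindep hmeas i hiT)
  simpa [hmean T, Pi.zero_def] using h

lemma key_lemma (hindep : iIndepFun X ℙ)
    (hmeas : ∀ T, Measurable (X T)) (hint : ∀ T, Integrable (X T) ℙ)
    (hmean : ∀ T, ∫ ω, X T ω ∂ℙ = 0) :
    ∀ (k : ℕ) (L : List (Fin n)), L.length = k → ∀ (i : Fin n),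
    diffQ X (i :: L)
      =ᵐ[ℙ] fun ω => ∑ T ∈ Finset.univ.filter
        (fun T : Finset (Fin n) => i ∈ T ∧ ∀ j ∈ L, j ∉ T), X T ω := by
  intro k
  induction k using Nat.strong_induction_on with
  | _ k IH =>
  intro L hLk i
  classical
  set C : Finset (Finset (Fin n)) :=
    Finset.univ.filter (fun T : Finset (Fin n) => ∀ m ∈ L, m ∉ T) with hC
  -- Step A: the integrand is a.e. equal to ∑_{T ∈ C} X T
  have hdrop : ∀ᵐ ω ∂ℙ, ∀ (j : Fin L.length),
      diffQ X (L.drop j.1) ω = ∑ T ∈ Finset.univ.filter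
        (fun T => L.get j ∈ T ∧ ∀ m ∈ L.drop (j.1+1), m ∉ T), X T ω := by
    rw [ae_all_iff]
    intro j
    have h1 : L.drop j.1 = L.get j :: L.drop (j.1+1) := by
      rw [List.drop_eq_getElem_cons j.2]
      rfl
    rw [h1]
    exact IH (L.drop (j.1+1)).length (by simp [List.length_drop]; omega) _ rfl _
  have hFg : (fun ω => (∑ T : Finset (Fin n), X T ω)
        - ∑ j ∈ Finset.range L.length, diffQ X (L.drop j) ω)
      =ᵐ[ℙ] fun ω => ∑ T ∈ C, X T ω := by
    filter_upwards [hdrop] with ω hω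
    have hrange : ∑ j ∈ Finset.range L.length, diffQ X (L.drop j) ω
        = ∑ j : Fin L.length, diffQ X (L.drop j.1) ω := by
      rw [Finset.sum_range]
    rw [hrange]
    have : ∑ j : Fin L.length, diffQ X (L.drop j.1) ω
        = ∑ j : Fin L.length, ∑ T ∈ Finset.univ.filter
            (fun T => L.get j ∈ T ∧ ∀ m ∈ L.drop (j.1+1), m ∉ T), X T ω :=
      Finset.sum_congr rfl fun j _ => hω j
    rw [this, hC]
    exact partition_sum L (fun T => X T ω)
  -- Step B: compute the conditional expectation
  have hcond : ∀ᵐ ω ∂ℙ, ∀ T ∈ C,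
      ((ℙ : Measure Ω)[X T | agentSigma X i]) ω
        = (if i ∈ T then X T ω else 0) := by
    rw [show (∀ᵐ ω ∂(ℙ : Measure Ω), ∀ T ∈ C,
        ((ℙ : Measure Ω)[X T | agentSigma X i]) ω = (if i ∈ T then X T ω else 0)) ↔
        (∀ᵐ ω ∂(ℙ : Measure Ω), ∀ T ∈ (C : Set (Finset (Fin n))),
        ((ℙ : Measure Ω)[X T | agentSigma X i]) ω = (if i ∈ T then X T ω else 0)) by
      simp only [Finset.mem_coe]]
    rw [ae_ball_iff (C : Set (Finset (Fin n))).to_countable]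
    intro T _
    by_cases hiT : i ∈ T
    · rw [condexp_mem hmeas hint i hiT]
      filter_upwards with ω
      simp [hiT]
    · filter_upwards [condexp_not_mem hindep hmeas hmean i hiT] with ω hω
      simp [hiT, hω]
  rw [diffQ]
  calc (ℙ : Measure Ω)[(fun ω => (∑ T : Finset (Fin n), X T ω)
        - ∑ j ∈ Finset.range L.length, diffQ X (L.drop j) ω) | agentSigma X i]
      =ᵐ[ℙ] (ℙ : Measure Ω)[(fun ω => ∑ T ∈ C, X T ω) | agentSigma X i] :=
        condExp_congr_ae hFg
    _ =ᵐ[ℙ] ∑ T ∈ C, (ℙ : Measure Ω)[X T | agentSigma X i] := by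
        have h := condExp_finsetSum (μ := ℙ) (m := agentSigma X i) (s := C)
          (f := fun T => X T) (fun T _ => hint T)
        have heq : (fun ω => ∑ T ∈ C, X T ω) = ∑ T ∈ C, X T := by
          funext ω; simp [Finset.sum_apply]
        rw [heq]
        exact h
    _ =ᵐ[ℙ] fun ω => ∑ T ∈ Finset.univ.filter
        (fun T : Finset (Fin n) => i ∈ T ∧ ∀ j ∈ L, j ∉ T), X T ω := by
        filter_upwards [hcond] with ω hω
        have h1 : (∑ T ∈ C, (ℙ : Measure Ω)[X T | agentSigma X i]) ω
            = ∑ T ∈ C, ((ℙ : Measure Ω)[X T | agentSigma X i]) ω :=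
          Finset.sum_apply ω C _
        rw [h1, Finset.sum_congr rfl hω, ← Finset.sum_filter]
        congr 1
        ext T
        simp only [hC, Finset.mem_filter, Finset.mem_univ, true_and]
        tauto
end Aux

/-- In the partial information model, the difference query
`diff(i_1, …, i_k)` equals (a.s.) the sum of `X T` over those `T` containing
`i_k` but none of `i_1, …, i_{k-1}`, i.e. the conditional expectation of `Y`
given the signals seen by `i_k` but by none of the earlier agents. -/
theorem stmt4 {Ω : Type*} [MeasureSpace Ω] [IsProbabilityMeasure (ℙ : Measure Ω)]
    (n : ℕ) (X : Finset (Fin n) → Ω → ℝ)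
    (hindep : iIndepFun X ℙ)
    (hmeas : ∀ T, Measurable (X T))
    (hL2 : ∀ T, MemLp (X T) 2 ℙ)
    (hmean : ∀ T, ∫ ω, X T ω ∂ℙ = 0)
    (hempty : X ∅ = 0)
    (i : Fin n) (L : List (Fin n)) :
    diffQ X (i :: L)
      =ᵐ[ℙ] fun ω => ∑ T ∈ Finset.univ.filter
        (fun T : Finset (Fin n) => i ∈ T ∧ ∀ j ∈ L, j ∉ T), X T ω :=
  key_lemma hindep hmeas (fun T => (hL2 T).integrable one_le_two) hmean
    L.length L rfl i
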